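/- For every x ≥ 0, the scale function S(x) := ∫_0^x exp{ 2∫_1^u (g(z) − bz)/(2γ²z + σ²z²) dz } du is finite; that is, u ↦ exp{ 2∫_1^u (g(z) − bz)/(2γ²z + σ²z²) dz } is integrable on (0,x) for every x > 0. -/

import Mathlib

open MeasureTheory Set

/-- For every x ≥ 0 the scale function S(x) = ∫_0^x exp{2∫_1^u (g(z)−bz)/(2γ²z+σ²z²) dz} du
is finite; i.e. the integrand is integrable on (0,x) for every x > 0. -/
theorem stmt_15 (g : ℝ → ℝ) (b γ σ : ℝ)
    (hg_cont : ContinuousOn g (Ici 0)) (hg0 : g 0 = 0)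
    (hγ : 0 < γ) (hσ : 0 ≤ σ) :
    ∀ x : ℝ, 0 < x →
      IntegrableOn
        (fun u => Real.exp
          (2 * ∫ z in (1:ℝ)..u, (g z - b * z) / (2 * γ ^ 2 * z + σ ^ 2 * z ^ 2)))
        (Ioc 0 x) volume := by
  intro x hx
  set f : ℝ → ℝ := fun z => (g z - b * z) / (2 * γ ^ 2 * z + σ ^ 2 * z ^ 2) with hfdef
  have hγ2 : (0:ℝ) < γ ^ 2 := by positivity
  have hden : ∀ z : ℝ, 0 < z → 0 < 2 * γ ^ 2 * z + σ ^ 2 * z ^ 2 := by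
    intro z hz; positivity
  -- continuity of f on (0,∞)
  have hf_cont : ContinuousOn f (Ioi 0) := by
    apply ContinuousOn.div
    · exact (hg_cont.mono (Ioi_subset_Ici le_rfl)).sub (continuous_const.mul continuous_id).continuousOn
    · fun_prop
    · intro z hz; exact (hden z hz).ne'
  -- interval integrability of f on subintervals of (0,∞)
  have hf_int : ∀ a c : ℝ, 0 < a → 0 < c → IntervalIntegrable f volume a c := by
    intro a c ha hc
    apply (hf_cont.mono ?_).intervalIntegrable
    intro z hz
    rcases Set.mem_uIcc.1 hz with ⟨h1, _⟩ | ⟨h1, _⟩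
    · exact lt_of_lt_of_le ha h1
    · exact lt_of_lt_of_le hc h1
  -- continuity of the primitive on (0,∞)
  set F : ℝ → ℝ := fun u => ∫ z in (1:ℝ)..u, f z with hFdef
  have hF_cont : ContinuousOn F (Ioi 0) := by
    intro u hu
    have hd : HasDerivAt F (f u) u :=
      intervalIntegral.integral_hasDerivAt_right (hf_int 1 u one_pos hu)
        (hf_cont.stronglyMeasurableAtFilter isOpen_Ioi u hu)
        (hf_cont.continuousAt (isOpen_Ioi.mem_nhds hu))
    exact hd.continuousAt.continuousWithinAt
  have hexp_cont : ContinuousOn (fun u => Real.exp (2 * F u)) (Ioi 0) :=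
    Real.continuous_exp.comp_continuousOn (continuousOn_const.mul hF_cont)
  -- choose δ
  set ε : ℝ := γ ^ 2 / 4 with hεdef
  have hε : 0 < ε := by positivity
  have hcont0 : ContinuousWithinAt g (Ici 0) 0 := hg_cont 0 Set.self_mem_Ici
  rw [Metric.continuousWithinAt_iff] at hcont0
  obtain ⟨δ0, hδ0, hδ0bound⟩ := hcont0 ε hε
  set δ : ℝ := min (δ0 / 2) (min 1 x) with hδdef
  have hδpos : 0 < δ := lt_min (by linarith) (lt_min one_pos hx)
  have hδ1 : δ ≤ 1 := le_trans (min_le_right _ _) (min_le_left _ _)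
  have hδx : δ ≤ x := le_trans (min_le_right _ _) (min_le_right _ _)
  have hδδ0 : δ < δ0 := lt_of_le_of_lt (min_le_left _ _) (by linarith)
  -- |g z| ≤ ε for z ∈ (0, δ]
  have hgsmall : ∀ z : ℝ, 0 < z → z ≤ δ → |g z| ≤ ε := by
    intro z hz hzδ
    have : dist (g z) (g 0) < ε := by
      apply hδ0bound (le_of_lt hz)
      rw [Real.dist_eq, sub_zero, abs_of_pos hz]
      exact lt_of_le_of_lt hzδ hδδ0
    rw [hg0, Real.dist_eq, sub_zero] at this
    exact this.le
  -- pointwise bound on f near 0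
  have hf_bound : ∀ z : ℝ, 0 < z → z ≤ δ →
      |f z| ≤ ε / (2 * γ ^ 2) * z⁻¹ + |b| / (2 * γ ^ 2) := by
    intro z hz hzδ
    have hd := hden z hz
    have h1 : |f z| = |g z - b * z| / (2 * γ ^ 2 * z + σ ^ 2 * z ^ 2) := by
      rw [hfdef]; simp [abs_div, abs_of_pos hd]
    rw [h1]
    have hnum : |g z - b * z| ≤ ε + |b| * z := by
      calc |g z - b * z| ≤ |g z| + |b * z| := abs_sub _ _
        _ ≤ ε + |b| * z := by
            rw [abs_mul, abs_of_pos hz]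
            exact add_le_add (hgsmall z hz hzδ) le_rfl
    have hden2 : 2 * γ ^ 2 * z ≤ 2 * γ ^ 2 * z + σ ^ 2 * z ^ 2 := by nlinarith
    have hden2pos : 0 < 2 * γ ^ 2 * z := by positivity
    calc |g z - b * z| / (2 * γ ^ 2 * z + σ ^ 2 * z ^ 2)
        ≤ (ε + |b| * z) / (2 * γ ^ 2 * z) := by
          apply div_le_div₀ (by positivity) hnum hden2pos hden2
      _ = ε / (2 * γ ^ 2) * z⁻¹ + |b| / (2 * γ ^ 2) := by
          field_simp
    done
  -- the fixed constant c = ∫_δ^1 f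
  set c : ℝ := ∫ z in δ..(1:ℝ), f z with hcdef
  set K : ℝ := 2 * |c| + |b| * δ / γ ^ 2 + (1/4) * Real.log δ with hKdef
  -- key bound: for u ∈ (0, δ], 2 F u ≤ K - (1/4) log u
  have key : ∀ u : ℝ, 0 < u → u ≤ δ →
      2 * F u ≤ K - (1/4) * Real.log u := by
    intro u hu huδ
    have hsplit : F u = -(∫ z in u..δ, f z) - c := by
      have h1 : (∫ z in u..δ, f z) + (∫ z in δ..(1:ℝ), f z) = ∫ z in u..(1:ℝ), f z :=
        intervalIntegral.integral_add_adjacent_intervals (hf_int u δ hu hδpos) (hf_int δ 1 hδpos one_pos)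
      have h2 : F u = -(∫ z in u..(1:ℝ), f z) := intervalIntegral.integral_symm u 1
      rw [h2, ← h1, hcdef]; ring
    -- bound on ∫_u^δ |f|
    have hb1 : |∫ z in u..δ, f z| ≤ ∫ z in u..δ, |f z| := by
      simpa [Real.norm_eq_abs] using
        intervalIntegral.norm_integral_le_integral_norm (f := f) (μ := volume) huδ
    have hinv : IntervalIntegrable (fun z : ℝ => z⁻¹) volume u δ := by
      apply intervalIntegral.intervalIntegrable_inv
      · intro z hz
        rcases Set.mem_uIcc.1 hz with ⟨h1, _⟩ | ⟨h1, _⟩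
        · exact (lt_of_lt_of_le hu h1).ne'
        · exact (lt_of_lt_of_le hδpos h1).ne'
      · exact continuousOn_id
    have hintb : IntervalIntegrable (fun z => ε / (2 * γ ^ 2) * z⁻¹ + |b| / (2 * γ ^ 2)) volume u δ :=
      (hinv.const_mul _).add intervalIntegrable_const
    have hb2 : (∫ z in u..δ, |f z|) ≤ ∫ z in u..δ, (ε / (2 * γ ^ 2) * z⁻¹ + |b| / (2 * γ ^ 2)) := by
      apply intervalIntegral.integral_mono_on huδ ((hf_int u δ hu hδpos).abs) hintb
      intro z hz
      exact hf_bound z (lt_of_lt_of_le hu hz.1) hz.2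
    have hb3 : (∫ z in u..δ, (ε / (2 * γ ^ 2) * z⁻¹ + |b| / (2 * γ ^ 2)))
        = ε / (2 * γ ^ 2) * (Real.log δ - Real.log u) + |b| / (2 * γ ^ 2) * (δ - u) := by
      rw [intervalIntegral.integral_add (hinv.const_mul _) intervalIntegrable_const,
        intervalIntegral.integral_const_mul, integral_inv_of_pos hu hδpos,
        intervalIntegral.integral_const, Real.log_div hδpos.ne' hu.ne']
      simp [smul_eq_mul]
      ring
    have hε2 : ε / (2 * γ ^ 2) = 1 / 8 := by rw [hεdef]; field_simp; ring
    have hbb : |∫ z in u..δ, f z| ≤ (1/8) * (Real.log δ - Real.log u) + |b| / (2 * γ ^ 2) * δ := by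
      have : |b| / (2 * γ ^ 2) * (δ - u) ≤ |b| / (2 * γ ^ 2) * δ := by
        apply mul_le_mul_of_nonneg_left (by linarith) (by positivity)
      calc |∫ z in u..δ, f z| ≤ _ := hb1
        _ ≤ _ := hb2
        _ = _ := hb3
        _ ≤ (1/8) * (Real.log δ - Real.log u) + |b| / (2 * γ ^ 2) * δ := by
            rw [hε2]; linarith
    have : 2 * F u ≤ 2 * |∫ z in u..δ, f z| + 2 * |c| := by
      rw [hsplit]
      have h1 : -(∫ z in u..δ, f z) ≤ |∫ z in u..δ, f z| := neg_le_abs _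
      have h2 : -c ≤ |c| := neg_le_abs _
      linarith
    rw [hKdef]
    have hbd : |b| / (2 * γ ^ 2) * δ = |b| * δ / γ ^ 2 / 2 := by ring
    nlinarith [abs_nonneg c]
  -- integrability near 0
  have hmeas : AEStronglyMeasurable (fun u => Real.exp (2 * F u)) (volume.restrict (Ioc 0 δ)) :=
    (hexp_cont.mono (fun z hz => hz.1)).aestronglyMeasurable measurableSet_Ioc
  have hint1 : IntegrableOn (fun u => Real.exp (2 * F u)) (Ioc 0 δ) volume := by
    apply Integrable.mono' (g := fun u => Real.exp K * u ^ (-(1/4) : ℝ))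
    · have h0 : IntegrableOn (fun u : ℝ => u ^ (-(1/4) : ℝ)) (Ioc 0 δ) volume :=
        (intervalIntegral.intervalIntegrable_rpow' (by norm_num)).1
      exact h0.const_mul _
    · exact hmeas
    · rw [ae_restrict_iff' measurableSet_Ioc]
      filter_upwards with u
      intro hu
      rw [Real.norm_eq_abs, abs_of_pos (Real.exp_pos _)]
      have h1 : 2 * F u ≤ K - (1/4) * Real.log u := key u hu.1 hu.2
      calc Real.exp (2 * F u) ≤ Real.exp (K - (1/4) * Real.log u) := Real.exp_le_exp.2 h1
        _ = Real.exp K * u ^ (-(1/4) : ℝ) := by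
            rw [Real.rpow_def_of_pos hu.1, ← Real.exp_add]
            congr 1
            ring
  -- integrability away from 0
  have hint2 : IntegrableOn (fun u => Real.exp (2 * F u)) (Ioc δ x) volume := by
    apply ((hexp_cont.mono ?_).integrableOn_Icc).mono_set Ioc_subset_Icc_self
    intro z hz
    exact lt_of_lt_of_le hδpos hz.1
  have := (hint1.union hint2).mono_set (by rw [Ioc_union_Ioc_eq_Ioc hδpos.le hδx])
  exact this
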